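/- Let X be a compact metric space and α > 0. For σ ∈ U^{ℓ+1}_α define the witness set w_α(σ) = ∩ᵢ B̄_α(xᵢ). Suppose w_α : U^{ℓ+1}_α → K(X) is continuous (Hausdorff metric). Then for every ε > 0 there exists δ > 0 such that for all β ∈ [α, α+δ] and all σ ∈ U^{ℓ+1}_α, the Hausdorff distance D(w_α(σ), w_β(σ)) ≤ ε. -/

import Mathlib

/-- The closed `α`-neighborhood of the diagonal in `X^n`:
`U^n_α = {x : ∃ t, d(xᵢ,t) ≤ α for all i}`. -/
def diagNbhd {X : Type*} [MetricSpace X] (α : ℝ) (n : ℕ) :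
    Set (Fin n → X) :=
  {x | ∃ t : X, ∀ i, dist (x i) t ≤ α}

/-- The witness set `w_β(σ) = ⋂ᵢ B̄_β(σᵢ)`. -/
def witnessSet {X : Type*} [MetricSpace X] (β : ℝ) {n : ℕ}
    (σ : Fin n → X) : Set X :=
  ⋂ i, Metric.closedBall (σ i) β

open Metric Set

lemma witnessSet_isClosed {X : Type*} [MetricSpace X] (β : ℝ) {n : ℕ} (σ : Fin n → X) :
    IsClosed (witnessSet β σ) :=
  isClosed_iInter fun _ => isClosed_closedBall

lemma witness_shrink {X : Type*} [MetricSpace X] [CompactSpace X] {α ε : ℝ}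
    (hε : 0 < ε) {n : ℕ} (σ₀ : Fin n → X) :
    ∃ γ > (0:ℝ), ∀ t : X, (∀ i, dist (σ₀ i) t ≤ α + γ) →
      Metric.infDist t (witnessSet α σ₀) ≤ ε := by
  by_contra h
  push_neg at h
  have hK : ∀ m : ℕ, ∃ t : X, (∀ i, dist (σ₀ i) t ≤ α + 1/((m:ℝ)+1)) ∧
      ε ≤ infDist t (witnessSet α σ₀) := by
    intro m
    obtain ⟨t, ht1, ht2⟩ := h (1/((m:ℝ)+1)) (by positivity)
    exact ⟨t, ht1, ht2.le⟩
  set K : ℕ → Set X := fun m =>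
    {t | (∀ i, dist (σ₀ i) t ≤ α + 1/((m:ℝ)+1)) ∧ ε ≤ infDist t (witnessSet α σ₀)} with hKdef
  have hcl : ∀ m, IsClosed (K m) := by
    intro m
    have heq : K m = (⋂ i, {t : X | dist (σ₀ i) t ≤ α + 1/((m:ℝ)+1)}) ∩
        {t : X | ε ≤ infDist t (witnessSet α σ₀)} := by
      ext t
      simp [hKdef, Set.mem_iInter]
    rw [heq]
    refine IsClosed.inter (isClosed_iInter fun i => isClosed_le ?_ continuous_const)
      (isClosed_le continuous_const (continuous_infDist_pt _))
    exact Continuous.dist continuous_const continuous_id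
  have hsub : ∀ m, K (m+1) ⊆ K m := by
    intro m t ht
    obtain ⟨h1, h2⟩ := ht
    refine ⟨fun i => (h1 i).trans ?_, h2⟩
    have h0 : (0:ℝ) < (m:ℝ)+1 := by positivity
    have : (1:ℝ)/((m:ℝ)+1+1) ≤ 1/((m:ℝ)+1) :=
      one_div_le_one_div_of_le h0 (by linarith)
    push_cast
    linarith
  have hne : (⋂ m, K m).Nonempty :=
    IsCompact.nonempty_iInter_of_sequence_nonempty_isCompact_isClosed K hsub
      (fun m => hK m) ((hcl 0).isCompact) hcl
  obtain ⟨t, ht⟩ := hne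
  simp only [Set.mem_iInter] at ht
  have htw : t ∈ witnessSet α σ₀ := by
    refine Set.mem_iInter.2 fun i => ?_
    rw [mem_closedBall, dist_comm]
    refine le_of_forall_pos_le_add fun η hη => ?_
    obtain ⟨m, hm⟩ := exists_nat_one_div_lt (K := ℝ) hη
    exact ((ht m).1 i).trans (by linarith)
  have h0 := (ht 0).2
  rw [infDist_zero_of_mem htw] at h0
  linarith

lemma diagNbhd_isCompact {X : Type*} [MetricSpace X] [CompactSpace X] (α : ℝ) (n : ℕ) :
    IsCompact (diagNbhd (X := X) α n) := by
  have heq : diagNbhd (X := X) α n =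
      Prod.fst '' {p : (Fin n → X) × X | ∀ i, dist (p.1 i) p.2 ≤ α} := by
    ext x
    simp only [diagNbhd, Set.mem_image, Set.mem_setOf_eq, Prod.exists]
    constructor
    · rintro ⟨t, ht⟩; exact ⟨x, t, ht, rfl⟩
    · rintro ⟨y, t, ht, rfl⟩; exact ⟨t, ht⟩
  rw [heq]
  apply IsCompact.image _ continuous_fst
  apply IsCompact.of_isClosed_subset isCompact_univ _ (Set.subset_univ _)
  have : {p : (Fin n → X) × X | ∀ i, dist (p.1 i) p.2 ≤ α} =
      ⋂ i, {p : (Fin n → X) × X | dist (p.1 i) p.2 ≤ α} := by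
    ext p; simp
  rw [this]
  refine isClosed_iInter fun i => isClosed_le ?_ continuous_const
  exact Continuous.dist ((continuous_apply i).comp continuous_fst) continuous_snd

lemma witnessSet_nonempty {X : Type*} [MetricSpace X] {α : ℝ} {n : ℕ}
    {σ : Fin n → X} (hσ : σ ∈ diagNbhd α n) : (witnessSet α σ).Nonempty := by
  obtain ⟨t, ht⟩ := hσ
  exact ⟨t, Set.mem_iInter.2 fun i => by rw [mem_closedBall, dist_comm]; exact ht i⟩

/-- if `w_α : U^{ℓ+1}_α → K(X)` is continuous (for the Hausdorff
metric), then for every `ε > 0` there is `δ > 0` such that for all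
`β ∈ [α, α+δ]` and all `σ ∈ U^{ℓ+1}_α`, `D(w_α(σ), w_β(σ)) ≤ ε`. -/
theorem witness_uniform_hausdorff_approx
    {X : Type*} [MetricSpace X] [CompactSpace X]
    (α : ℝ) (hα : 0 < α) (ℓ : ℕ)
    (hw_cont : ∀ σ ∈ diagNbhd (X := X) α (ℓ + 1), ∀ ε > (0 : ℝ), ∃ δ > (0 : ℝ),
      ∀ τ ∈ diagNbhd (X := X) α (ℓ + 1), (∀ i, dist (σ i) (τ i) < δ) →
        Metric.hausdorffDist (witnessSet α σ) (witnessSet α τ) < ε) :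
    ∀ ε > (0 : ℝ), ∃ δ > (0 : ℝ), ∀ β : ℝ, α ≤ β → β ≤ α + δ →
      ∀ σ ∈ diagNbhd (X := X) α (ℓ + 1),
        Metric.hausdorffDist (witnessSet α σ) (witnessSet β σ) ≤ ε := by
  intro ε hε
  set U := diagNbhd (X := X) α (ℓ + 1) with hU
  choose γ hγpos hγ using fun σ₀ : Fin (ℓ+1) → X =>
    witness_shrink (α := α) (half_pos hε) σ₀
  have h2 : ∀ σ₀ : Fin (ℓ+1) → X, ∃ d > (0:ℝ), σ₀ ∈ U →
      ∀ τ ∈ U, (∀ i, dist (σ₀ i) (τ i) < d) →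
        hausdorffDist (witnessSet α σ₀) (witnessSet α τ) < ε/2 := by
    intro σ₀
    by_cases hm : σ₀ ∈ U
    · obtain ⟨d, hd, h⟩ := hw_cont σ₀ hm (ε/2) (half_pos hε)
      exact ⟨d, hd, fun _ => h⟩
    · exact ⟨1, one_pos, fun h => absurd h hm⟩
  choose d hdpos hd using h2
  set r : (Fin (ℓ+1) → X) → ℝ := fun σ₀ => min (d σ₀) (γ σ₀ / 2) with hr
  have hrpos : ∀ σ₀, 0 < r σ₀ := fun σ₀ => lt_min (hdpos σ₀) (half_pos (hγpos σ₀))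
  obtain ⟨s, hsU, hcover⟩ := (diagNbhd_isCompact (X := X) α (ℓ+1)).elim_nhds_subcover
    (fun σ₀ => ball σ₀ (r σ₀)) (fun x _ => ball_mem_nhds x (hrpos x))
  rcases s.eq_empty_or_nonempty with hse | hsne
  · refine ⟨1, one_pos, fun β _ _ σ hσ => ?_⟩
    have := hcover hσ
    simp [hse] at this
  · refine ⟨s.inf' hsne (fun x => γ x / 2),
      (Finset.lt_inf'_iff hsne).2 fun x _ => half_pos (hγpos x), ?_⟩
    intro β hβ1 hβ2 σ hσ
    obtain ⟨j, hjmem⟩ := Set.mem_iUnion.1 (hcover hσ)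
    simp only [Set.mem_iUnion, exists_prop] at hjmem
    obtain ⟨hjs, hjball⟩ := hjmem
    have hjU : j ∈ U := hsU j hjs
    -- coordinatewise closeness
    have hclose : ∀ i, dist (j i) (σ i) < r j := by
      intro i
      calc dist (j i) (σ i) = dist (σ i) (j i) := dist_comm _ _
        _ ≤ dist σ j := dist_le_pi_dist σ j i
        _ < r j := mem_ball.1 hjball
    -- nonemptiness / finiteness
    have hne1 : (witnessSet α j).Nonempty := witnessSet_nonempty hjU
    have hne2 : (witnessSet α σ).Nonempty := witnessSet_nonempty hσ
    have hfin : EMetric.hausdorffEdist (witnessSet α j) (witnessSet α σ) ≠ ⊤ :=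
      hausdorffEdist_ne_top_of_nonempty_of_bounded hne1 hne2
        isBounded_of_compactSpace isBounded_of_compactSpace
    have hHD : hausdorffDist (witnessSet α j) (witnessSet α σ) < ε/2 :=
      hd j hjU σ hσ (fun i => (hclose i).trans_le (min_le_left _ _))
    apply hausdorffDist_le_of_infDist hε.le
    · intro x hx
      have : x ∈ witnessSet β σ := by
        refine Set.mem_iInter.2 fun i => ?_
        exact closedBall_subset_closedBall hβ1 (Set.mem_iInter.1 hx i)
      rw [infDist_zero_of_mem this]
      exact hε.le
    · intro y hy
      have hyγ : ∀ i, dist (j i) y ≤ α + γ j := by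
        intro i
        have h1 : dist y (σ i) ≤ β := mem_closedBall.1 (Set.mem_iInter.1 hy i)
        have h2 : dist (j i) (σ i) < γ j / 2 := (hclose i).trans_le (min_le_right _ _)
        have h3 : β ≤ α + γ j / 2 := hβ2.trans (by
          have : s.inf' hsne (fun x => γ x / 2) ≤ γ j / 2 := Finset.inf'_le _ hjs
          linarith)
        calc dist (j i) y ≤ dist (j i) (σ i) + dist (σ i) y := dist_triangle _ _ _
          _ = dist (j i) (σ i) + dist y (σ i) := by rw [dist_comm (σ i) y]
          _ ≤ γ j / 2 + (α + γ j / 2) := by linarith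
          _ = α + γ j := by ring
      have hinf1 : infDist y (witnessSet α j) ≤ ε/2 := hγ j y hyγ
      have := infDist_le_infDist_add_hausdorffDist (x := y) hfin
      linarith
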